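/- Let m ≥ 1 and l ≥ 1 be integers, let A ⊆ ℕ^m be finite with 0 ∈ A, and assume that for every coordinate i ∈ {1, …, m} there exists α ∈ A with α_i ≥ 1. Then min_J Béz(A^l; J) = ((lm)!/(m!)^l) · (min_I Béz(A; I))^l, where J ranges over all partitions of {1, …, lm} and I ranges over all partitions of {1, …, m}. -/

import Mathlib

open Finset

open Classical in
/-- The support `A(H)` of a graph `H`: the exponent vectors `e_{v₁} + ⋯ + e_{v_s}`
(indicator vectors) of the cliques `{v₁, …, v_s}` of `H` of size `s ≤ 3`. -/
noncomputable def graphSupport {V : Type*} [Fintype V] (H : SimpleGraph V) :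
    Finset (V → ℕ) :=
  ((Finset.univ : Finset (Finset V)).filter
      (fun T : Finset V => T.card ≤ 3 ∧ H.IsClique (T : Set V))).image
    (fun T v => if v ∈ T then 1 else 0)

/-- The multi-homogeneous Bézout number of a support `A` with respect to the family
of groups of variables `I₁, …, I_k`, namely `(m!/(a₁!⋯a_k!)) · ∏_j d_j ^ a_j` where
`a_j = #I_j` and `d_j = max_{α ∈ A} ∑_{l ∈ I_j} α_l`. -/
noncomputable def bez {V : Type*} [Fintype V] (A : Finset (V → ℕ))
    {k : ℕ} (I : Fin k → Finset V) : ℕ :=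
  Nat.multinomial Finset.univ (fun j => (I j).card) *
    ∏ j, (A.sup fun α => ∑ l ∈ I j, α l) ^ (I j).card

/-- `I₁, …, I_k` is a partition of the (finite) type `V`: the classes are pairwise
disjoint and they cover `V`. -/
def IsPartitionFam {V : Type*} {k : ℕ} (I : Fin k → Finset V) : Prop :=
  (∀ i j, i ≠ j → Disjoint (I i) (I j)) ∧ ∀ v, ∃ j, v ∈ I j

/-- The family of classes `I₁, …, I_k` is a proper coloring of `H`: no class contains
two adjacent vertices. -/
def ProperFam {V : Type*} (H : SimpleGraph V) {k : ℕ} (I : Fin k → Finset V) : Prop :=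
  ∀ j, ∀ u ∈ I j, ∀ v ∈ I j, ¬ H.Adj u v

/-- The minimal multi-homogeneous Bézout number of a support `A`, over all partitions
of the set of variables. -/
noncomputable def minBez {V : Type*} [Fintype V] (A : Finset (V → ℕ)) : ℕ :=
  sInf {b : ℕ | ∃ (k : ℕ) (I : Fin k → Finset V), IsPartitionFam I ∧ bez A I = b}

open Classical in
/-- The `l`-fold cartesian product `A^l` of a support `A ⊆ ℕ^V`: the concatenations
`(α⁽¹⁾, …, α⁽ˡ⁾)` of members of `A`, indexed by `Fin l × V`. -/
noncomputable def powSupport {V : Type*} [Fintype V] (A : Finset (V → ℕ)) (l : ℕ) :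
    Finset (Fin l × V → ℕ) :=
  (Fintype.piFinset (fun _ : Fin l => A)).image (fun f p => f p.1 p.2)

/-! ### Auxiliary lemmas -/

lemma mult_cancel {P X Y N : ℕ} (hP : 0 < P) (h1 : X * P = N) (h2 : Y * P = N) : X = Y :=
  Nat.eq_of_mul_eq_mul_right hP (h1.trans h2.symm)

lemma multSpec {α : Type*} [Fintype α] (f : α → ℕ) :
    Nat.multinomial univ f * ∏ i, (f i).factorial = (∑ i, f i).factorial := by
  rw [mul_comm]; exact Nat.multinomial_spec univ f

lemma pow_le_thing (l : ℕ) (a d : Fin l → ℕ) :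
    Nat.multinomial univ a * ∏ s, d s ^ a s ≤ (∑ s, d s) ^ (∑ s, a s) := by
  rw [Finset.sum_pow_eq_sum_piAntidiag univ d (∑ s, a s)]
  have ha : a ∈ Finset.piAntidiag univ (∑ s, a s) := by
    simp [Finset.mem_piAntidiag]
  have := Finset.single_le_sum
    (f := fun k : Fin l → ℕ => Nat.multinomial univ k * ∏ i, d i ^ k i)
    (fun i _ => Nat.zero_le _) ha
  simpa using this

lemma const_mult (l m : ℕ) :
    Nat.multinomial (univ : Finset (Fin l)) (fun _ => m) = (l * m).factorial / m.factorial ^ l := by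
  have h := Nat.multinomial_spec (univ : Finset (Fin l)) (fun _ => m)
  simp only [Finset.prod_const, Finset.sum_const, Finset.card_univ, Fintype.card_fin,
    smul_eq_mul] at h
  symm
  exact Nat.div_eq_of_eq_mul_right (pow_pos m.factorial_pos l) h.symm

lemma matrix_mult (k l m : ℕ) (a : Fin k → Fin l → ℕ) (ha : ∀ s, ∑ j, a j s = m) :
    Nat.multinomial univ (fun j => ∑ s, a j s) * ∏ j, Nat.multinomial univ (a j)
      = Nat.multinomial univ (fun _ : Fin l => m) * ∏ s, Nat.multinomial univ (fun j => a j s) := by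
  have hP : 0 < ∏ j, ∏ s, (a j s).factorial := by
    apply Finset.prod_pos; intro j _; apply Finset.prod_pos; intro s _; exact (a j s).factorial_pos
  apply mult_cancel (N := (∑ j, ∑ s, a j s).factorial) hP
  · calc (Nat.multinomial univ (fun j => ∑ s, a j s) * ∏ j, Nat.multinomial univ (a j)) *
          ∏ j, ∏ s, (a j s).factorial
        = Nat.multinomial univ (fun j => ∑ s, a j s) *
            ∏ j, (Nat.multinomial univ (a j) * ∏ s, (a j s).factorial) := by
          rw [Finset.prod_mul_distrib]; ring
      _ = Nat.multinomial univ (fun j => ∑ s, a j s) * ∏ j, (∑ s, a j s).factorial := by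
          congr 1; exact Finset.prod_congr rfl fun j _ => multSpec (a j)
      _ = (∑ j, ∑ s, a j s).factorial := multSpec _
  · calc (Nat.multinomial univ (fun _ : Fin l => m) * ∏ s, Nat.multinomial univ (fun j => a j s)) *
          ∏ j, ∏ s, (a j s).factorial
        = Nat.multinomial univ (fun _ : Fin l => m) *
            ∏ s, (Nat.multinomial univ (fun j => a j s) * ∏ j, (a j s).factorial) := by
          rw [Finset.prod_mul_distrib, Finset.prod_comm (f := fun j s => (a j s).factorial)]; ring
      _ = Nat.multinomial univ (fun _ : Fin l => m) * ∏ _s : Fin l, (m).factorial := by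
          congr 1; refine Finset.prod_congr rfl fun s _ => ?_
          rw [multSpec (fun j => a j s), ha s]
      _ = (∑ j, ∑ s, a j s).factorial := by
          have hsum : (∑ j, ∑ s, a j s) = ∑ _s : Fin l, m := by
            rw [Finset.sum_comm]; exact Finset.sum_congr rfl fun s _ => ha s
          rw [hsum, Finset.prod_const, ← multSpec (fun _ : Fin l => m), Finset.prod_const]

lemma prodtype_mult (k l m : ℕ) (b : Fin k → Fin l → ℕ) (hb : ∀ s, ∑ j, b j s = m) :
    Nat.multinomial (univ : Finset (Fin l × Fin k)) (fun p => b p.2 p.1)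
      = Nat.multinomial univ (fun _ : Fin l => m) * ∏ s, Nat.multinomial univ (fun j => b j s) := by
  have hP : 0 < ∏ p : Fin l × Fin k, (b p.2 p.1).factorial := by
    apply Finset.prod_pos; intro p _; exact (b p.2 p.1).factorial_pos
  apply mult_cancel (N := (∑ p : Fin l × Fin k, b p.2 p.1).factorial) hP
  · exact multSpec _
  · calc (Nat.multinomial univ (fun _ : Fin l => m) * ∏ s, Nat.multinomial univ (fun j => b j s)) *
          ∏ p : Fin l × Fin k, (b p.2 p.1).factorial
        = Nat.multinomial univ (fun _ : Fin l => m) *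
            ∏ s, (Nat.multinomial univ (fun j => b j s) * ∏ j, (b j s).factorial) := by
          rw [Fintype.prod_prod_type, Finset.prod_mul_distrib]; ring
      _ = Nat.multinomial univ (fun _ : Fin l => m) * ∏ _s : Fin l, (m).factorial := by
          congr 1; refine Finset.prod_congr rfl fun s _ => ?_
          rw [multSpec (fun j => b j s), hb s]
      _ = (∑ p : Fin l × Fin k, b p.2 p.1).factorial := by
          have hsum : (∑ p : Fin l × Fin k, b p.2 p.1) = ∑ _s : Fin l, m := by
            rw [Fintype.sum_prod_type]; exact Finset.sum_congr rfl fun s _ => hb s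
          rw [hsum, Finset.prod_const, ← multSpec (fun _ : Fin l => m), Finset.prod_const]

lemma multinomial_equiv {α β : Type*} [Fintype α] [Fintype β] (e : α ≃ β) (f : β → ℕ) :
    Nat.multinomial univ (fun x => f (e x)) = Nat.multinomial univ f := by
  have hP : 0 < ∏ i, (f i).factorial := by
    apply Finset.prod_pos; intro i _; exact (f i).factorial_pos
  apply mult_cancel (N := (∑ i, f i).factorial) hP
  · rw [← Fintype.prod_equiv e (fun x => (f (e x)).factorial) (fun i => (f i).factorial)
        (fun x => rfl),
      ← Fintype.sum_equiv e (fun x => f (e x)) f (fun x => rfl)]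
    exact multSpec _
  · exact multSpec _

lemma sum_card_partition {V : Type*} [Fintype V] [DecidableEq V] {k : ℕ}
    {I : Fin k → Finset V} (h : IsPartitionFam I) : ∑ j, (I j).card = Fintype.card V := by
  rw [← Finset.card_biUnion (fun i _ j _ hij => h.1 i j hij)]
  congr 1
  ext v
  simp only [mem_biUnion, mem_univ, true_and, iff_true]
  exact h.2 v

open Classical in
lemma filter_fst_eq {l m : ℕ} (S : Finset (Fin l × Fin m)) (s : Fin l) :
    S.filter (fun p => p.1 = s)
      = (univ.filter fun v => (s, v) ∈ S).map
          ⟨fun v => (s, v), fun a b h => by simpa using h⟩ := by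
  ext ⟨p1, p2⟩
  simp only [mem_filter, mem_map, Function.Embedding.coeFn_mk, mem_univ, true_and,
    Prod.mk.injEq]
  constructor
  · rintro ⟨hS, rfl⟩; exact ⟨p2, hS, rfl⟩
  · rintro ⟨v, hv, rfl, rfl⟩; exact ⟨hv, rfl⟩

open Classical in
lemma sum_layers {l m : ℕ} (S : Finset (Fin l × Fin m)) (f : Fin l → Fin m → ℕ) :
    ∑ p ∈ S, f p.1 p.2 = ∑ s, ∑ v ∈ univ.filter (fun v => (s, v) ∈ S), f s v := by
  rw [← Finset.sum_fiberwise_of_maps_to (g := Prod.fst) (t := univ)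
      (fun p _ => mem_univ p.1) (fun p : Fin l × Fin m => f p.1 p.2)]
  refine Finset.sum_congr rfl fun s _ => ?_
  rw [filter_fst_eq, Finset.sum_map]
  rfl

open Classical in
lemma card_layers {l m : ℕ} (S : Finset (Fin l × Fin m)) :
    S.card = ∑ s, (univ.filter (fun v => (s, v) ∈ S)).card := by
  rw [Finset.card_eq_sum_card_fiberwise (f := Prod.fst) (t := univ) (fun p _ => mem_univ p.1)]
  refine Finset.sum_congr rfl fun s _ => ?_
  rw [filter_fst_eq, Finset.card_map]

open Classical in
lemma sup_pow_layers {m : ℕ} (A : Finset (Fin m → ℕ)) (hA : A.Nonempty) (l : ℕ)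
    (S : Finset (Fin l × Fin m)) :
    (powSupport A l).sup (fun α => ∑ p ∈ S, α p)
      = ∑ s, A.sup (fun α => ∑ v ∈ univ.filter (fun v => (s, v) ∈ S), α v) := by
  rw [powSupport, Finset.sup_image]
  have hco : ((fun α : Fin l × Fin m → ℕ => ∑ p ∈ S, α p) ∘ fun f p => f p.1 p.2)
      = fun f : Fin l → Fin m → ℕ => ∑ p ∈ S, f p.1 p.2 := rfl
  rw [hco]
  apply le_antisymm
  · apply Finset.sup_le
    intro f hf
    rw [sum_layers]
    refine Finset.sum_le_sum fun s _ => ?_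
    exact Finset.le_sup (Fintype.mem_piFinset.1 hf s)
  · choose g hg hgs using fun s =>
      Finset.exists_mem_eq_sup A hA (fun α => ∑ v ∈ univ.filter (fun v => (s, v) ∈ S), α v)
    calc ∑ s, A.sup (fun α => ∑ v ∈ univ.filter (fun v => (s, v) ∈ S), α v)
        = ∑ s, ∑ v ∈ univ.filter (fun v => (s, v) ∈ S), g s v :=
          Finset.sum_congr rfl fun s _ => hgs s
      _ = ∑ p ∈ S, g p.1 p.2 := (sum_layers S g).symm
      _ ≤ _ := Finset.le_sup (f := fun f : Fin l → Fin m → ℕ => ∑ p ∈ S, f p.1 p.2)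
          (Fintype.mem_piFinset.2 hg)

open Classical in
lemma lower_bez {m l : ℕ} (A : Finset (Fin m → ℕ)) (hA : A.Nonempty) {k : ℕ}
    (J : Fin k → Finset (Fin l × Fin m)) (hJ : IsPartitionFam J) :
    Nat.multinomial (univ : Finset (Fin l)) (fun _ => m) * (minBez A) ^ l
      ≤ bez (powSupport A l) J := by
  set lay : Fin l → Fin k → Finset (Fin m) :=
    fun s j => univ.filter (fun v => (s, v) ∈ J j) with hlaydef
  have hlay : ∀ s, IsPartitionFam (lay s) := by
    intro s
    constructor
    · intro i j hij
      refine Finset.disjoint_left.2 fun v hvi hvj => ?_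
      exact Finset.disjoint_left.1 (hJ.1 i j hij) (mem_filter.1 hvi).2 (mem_filter.1 hvj).2
    · intro v
      obtain ⟨j, hj⟩ := hJ.2 (s, v)
      exact ⟨j, mem_filter.2 ⟨mem_univ v, hj⟩⟩
  set a : Fin k → Fin l → ℕ := fun j s => (lay s j).card with hadef
  set d : Fin k → Fin l → ℕ := fun j s => A.sup (fun α => ∑ v ∈ lay s j, α v) with hddef
  have ham : ∀ s, ∑ j, a j s = m := by
    intro s
    rw [hadef]
    simpa using sum_card_partition (hlay s)
  have hbezJ : bez (powSupport A l) J
      = Nat.multinomial univ (fun j => ∑ s, a j s) * ∏ j, (∑ s, d j s) ^ (∑ s, a j s) := by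
    rw [bez]
    congr 1
    · exact Nat.multinomial_congr fun j _ => card_layers (J j)
    · refine Finset.prod_congr rfl fun j _ => ?_
      rw [sup_pow_layers A hA l (J j), card_layers (J j)]
  have hbezlay : ∀ s, bez A (lay s)
      = Nat.multinomial univ (fun j => a j s) * ∏ j, d j s ^ a j s := fun s => rfl
  have hBle : ∀ s, minBez A ≤ bez A (lay s) := fun s =>
    Nat.sInf_le ⟨k, lay s, hlay s, rfl⟩
  calc Nat.multinomial (univ : Finset (Fin l)) (fun _ => m) * (minBez A) ^ l
      = Nat.multinomial (univ : Finset (Fin l)) (fun _ => m) * ∏ _s : Fin l, minBez A := by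
        rw [Finset.prod_const, card_univ, Fintype.card_fin]
    _ ≤ Nat.multinomial (univ : Finset (Fin l)) (fun _ => m) * ∏ s, bez A (lay s) :=
        Nat.mul_le_mul_left _ (Finset.prod_le_prod' fun s _ => hBle s)
    _ = (Nat.multinomial (univ : Finset (Fin l)) (fun _ => m) *
          ∏ s, Nat.multinomial univ (fun j => a j s)) * ∏ s, ∏ j, d j s ^ a j s := by
        rw [Finset.prod_congr rfl fun s _ => hbezlay s, Finset.prod_mul_distrib]; ring
    _ = (Nat.multinomial univ (fun j => ∑ s, a j s) * ∏ j, Nat.multinomial univ (a j)) *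
          ∏ j, ∏ s, d j s ^ a j s := by
        rw [← matrix_mult k l m a ham, Finset.prod_comm (f := fun s j => d j s ^ a j s)]
    _ = Nat.multinomial univ (fun j => ∑ s, a j s) *
          ∏ j, (Nat.multinomial univ (a j) * ∏ s, d j s ^ a j s) := by
        rw [Finset.prod_mul_distrib]; ring
    _ ≤ Nat.multinomial univ (fun j => ∑ s, a j s) * ∏ j, (∑ s, d j s) ^ (∑ s, a j s) :=
        Nat.mul_le_mul_left _ (Finset.prod_le_prod' fun j _ => pow_le_thing l (a j) (d j))
    _ = bez (powSupport A l) J := hbezJ.symm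

open Classical in
lemma upper_bez {m : ℕ} (l : ℕ) (A : Finset (Fin m → ℕ)) (hA : A.Nonempty) {k : ℕ}
    (I : Fin k → Finset (Fin m)) (hI : IsPartitionFam I) :
    ∃ (k' : ℕ) (J : Fin k' → Finset (Fin l × Fin m)), IsPartitionFam J ∧
      bez (powSupport A l) J
        = Nat.multinomial (univ : Finset (Fin l)) (fun _ => m) * (bez A I) ^ l := by
  let e : Fin l × Fin k ≃ Fin (l * k) := finProdFinEquiv
  refine ⟨l * k, fun t => {(e.symm t).1} ×ˢ I (e.symm t).2, ⟨?_, ?_⟩, ?_⟩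
  · intro t t' htt
    have h2 : e.symm t ≠ e.symm t' := fun h => htt (by simpa using congrArg e h)
    refine Finset.disjoint_left.2 fun p hp hp' => ?_
    simp only [mem_product, mem_singleton] at hp hp'
    by_cases hs : (e.symm t).1 = (e.symm t').1
    · have hjj : (e.symm t).2 ≠ (e.symm t').2 := fun h => h2 (Prod.ext hs h)
      exact Finset.disjoint_left.1 (hI.1 _ _ hjj) hp.2 hp'.2
    · exact hs (hp.1 ▸ hp'.1 ▸ rfl)
  · intro p
    obtain ⟨j, hj⟩ := hI.2 p.2
    refine ⟨e (p.1, j), ?_⟩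
    simp only [Equiv.symm_apply_apply, mem_product, mem_singleton]
    exact ⟨trivial, hj⟩
  · have hcard : ∀ t, ({(e.symm t).1} ×ˢ I (e.symm t).2).card = (I (e.symm t).2).card := by
      intro t; rw [Finset.card_product, Finset.card_singleton, one_mul]
    have hsup : ∀ t : Fin (l * k),
        (powSupport A l).sup (fun α => ∑ p ∈ {(e.symm t).1} ×ˢ I (e.symm t).2, α p)
          = A.sup (fun α => ∑ v ∈ I (e.symm t).2, α v) := by
      intro t
      rw [sup_pow_layers A hA l]
      rw [Finset.sum_eq_single_of_mem (e.symm t).1 (mem_univ _)]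
      · have hfil : (univ.filter
            (fun v => (((e.symm t).1, v) : Fin l × Fin m) ∈ {(e.symm t).1} ×ˢ I (e.symm t).2))
              = I (e.symm t).2 := by
          ext v
          simp [mem_product]
        rw [hfil]
      · intro s _ hne
        have hempty : (univ.filter
            (fun v => ((s, v) : Fin l × Fin m) ∈ {(e.symm t).1} ×ˢ I (e.symm t).2)) = ∅ := by
          ext v
          simp only [mem_filter, mem_univ, true_and, mem_product, mem_singleton,
            notMem_empty, iff_false, not_and]
          intro h; exact absurd h hne
        rw [hempty]
        exact Nat.eq_zero_of_le_zero (Finset.sup_le fun α _ => by simp)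
    rw [bez]
    have h1 : Nat.multinomial univ (fun t => ({(e.symm t).1} ×ˢ I (e.symm t).2).card)
        = Nat.multinomial (univ : Finset (Fin l)) (fun _ => m) *
            (Nat.multinomial univ (fun j => (I j).card)) ^ l := by
      rw [Nat.multinomial_congr fun t _ => hcard t]
      have := multinomial_equiv e.symm (fun p : Fin l × Fin k => (I p.2).card)
      rw [show (fun t => (I (e.symm t).2).card)
          = fun x => (fun p : Fin l × Fin k => (I p.2).card) (e.symm x) from rfl, this]
      rw [prodtype_mult k l m (fun j _ => (I j).card)
        (fun s => by simpa using sum_card_partition hI)]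
      rw [Finset.prod_const, card_univ, Fintype.card_fin]
    have h2 : ∏ t, ((powSupport A l).sup
          (fun α => ∑ p ∈ {(e.symm t).1} ×ˢ I (e.symm t).2, α p))
            ^ ({(e.symm t).1} ×ˢ I (e.symm t).2).card
        = (∏ j, (A.sup fun α => ∑ v ∈ I j, α v) ^ (I j).card) ^ l := by
      calc ∏ t, ((powSupport A l).sup
            (fun α => ∑ p ∈ {(e.symm t).1} ×ˢ I (e.symm t).2, α p))
              ^ ({(e.symm t).1} ×ˢ I (e.symm t).2).card
          = ∏ t, (A.sup fun α => ∑ v ∈ I (e.symm t).2, α v) ^ (I (e.symm t).2).card := by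
            refine Finset.prod_congr rfl fun t _ => ?_
            rw [hsup t, hcard t]
        _ = ∏ p : Fin l × Fin k, (A.sup fun α => ∑ v ∈ I p.2, α v) ^ (I p.2).card := by
            exact Fintype.prod_equiv e.symm _ _ (fun t => rfl)
        _ = (∏ j, (A.sup fun α => ∑ v ∈ I j, α v) ^ (I j).card) ^ l := by
            rw [Fintype.prod_prod_type]
            simp only []
            rw [Finset.prod_const, card_univ, Fintype.card_fin]
    rw [h1, h2, bez]
    rw [mul_pow]
    ring

/-- For `m, l ≥ 1` and a finite `A ⊆ ℕ^m` with `0 ∈ A` such that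
every coordinate is positive somewhere on `A`, the minimal Bézout number of `A^l`
equals `((lm)!/(m!)^l)` times the `l`-th power of the minimal Bézout number of `A`. -/
theorem stmt_10 (m l : ℕ) (hm : 1 ≤ m) (hl : 1 ≤ l) (A : Finset (Fin m → ℕ))
    (h0 : (0 : Fin m → ℕ) ∈ A) (hcoord : ∀ i : Fin m, ∃ α ∈ A, 1 ≤ α i) :
    minBez (powSupport A l) =
      ((l * m).factorial / m.factorial ^ l) * (minBez A) ^ l := by
  classical
  have hA : A.Nonempty := ⟨0, h0⟩
  set C := Nat.multinomial (univ : Finset (Fin l)) (fun _ => m) with hC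
  -- a minimizing partition for `A`
  have hne : {b : ℕ | ∃ (k : ℕ) (I : Fin k → Finset (Fin m)),
      IsPartitionFam I ∧ bez A I = b}.Nonempty := by
    refine ⟨bez A (fun _ : Fin 1 => univ), 1, fun _ => univ,
      ⟨fun i j hij => absurd (Subsingleton.elim i j) hij, fun v => ⟨0, mem_univ v⟩⟩, rfl⟩
  obtain ⟨k, I, hI, hIbez⟩ := Nat.sInf_mem hne
  obtain ⟨k', J, hJ, hJbez⟩ := upper_bez l A hA I hI
  have hub : C * (minBez A) ^ l ∈ {b : ℕ | ∃ (k : ℕ)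
      (J : Fin k → Finset (Fin l × Fin m)), IsPartitionFam J ∧ bez (powSupport A l) J = b} :=
    ⟨k', J, hJ, by rw [hJbez, hIbez]; rfl⟩
  have h1 : minBez (powSupport A l) ≤ C * (minBez A) ^ l := Nat.sInf_le hub
  obtain ⟨k2, J2, hJ2, hJ2bez⟩ := Nat.sInf_mem ⟨_, hub⟩
  have h2 : C * (minBez A) ^ l ≤ minBez (powSupport A l) := by
    rw [show minBez (powSupport A l) = bez (powSupport A l) J2 from hJ2bez.symm]
    exact lower_bez A hA J2 hJ2
  rw [le_antisymm h1 h2, hC, const_mult]
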